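/- arXiv:2204.03291 — 2 statements merged into one kernel-verified Lean document; each statement's English description precedes it below -/
import Mathlib

section
/- Let D = P⁻¹Q be an SBP operator (P symmetric positive definite, Q + Qᵀ = B = diag(-1,0,...,0,1)) and let a > 0. Consider the semi-discretization u' (t) = -a D u(t) + P⁻¹ S(u(t)) of the advection equation with SAT term S(u) = (-a(u_1 - g), 0, ..., 0)ᵀ enforcing the inflow boundary condition weakly with penalty parameter σ = -1 and boundary data g = 0. Then the discrete energy ‖u(t)‖_P² = u(t)ᵀ P u(t) is non-increasing: d/dt (uᵀ P u) = -a u_N² - a u_1² ≤ 0. -/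
open Matrix

/-- The SBP boundary matrix B = diag(-1,0,...,0,1). -/
def sbpB (n : ℕ) : Matrix (Fin (n + 2)) (Fin (n + 2)) ℝ :=
  Matrix.diagonal (fun i => if i = 0 then (-1 : ℝ) else if i = Fin.last (n + 1) then 1 else 0)

theorem stmt1 (n : ℕ) (P Q D : Matrix (Fin (n + 2)) (Fin (n + 2)) ℝ)
    (hP : P.PosDef) (hQ : Q + Qᵀ = sbpB n) (hD : D = P⁻¹ * Q)
    (a : ℝ) (ha : 0 < a) (u : ℝ → Fin (n + 2) → ℝ)
    (hu : ∀ t, HasDerivAt u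
      (-a • (D *ᵥ u t) + P⁻¹ *ᵥ (fun i => if i = 0 then -a * (u t 0 - 0) else 0)) t) :
    ∀ t, HasDerivAt (fun s => u s ⬝ᵥ (P *ᵥ u s))
        (-a * (u t (Fin.last (n + 1))) ^ 2 - a * (u t 0) ^ 2) t ∧
      -a * (u t (Fin.last (n + 1))) ^ 2 - a * (u t 0) ^ 2 ≤ 0 := by
  intro t
  have hdet : IsUnit P.det := hP.det_pos.ne'.isUnit
  have hPt : Pᵀ = P := hP.isHermitian.eq
  set S : Fin (n + 2) → ℝ := fun i => if i = 0 then -a * (u t 0 - 0) else 0 with hSdef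
  set v : Fin (n + 2) → ℝ := -a • (D *ᵥ u t) + P⁻¹ *ᵥ S with hvdef
  have hcoord : ∀ i, HasDerivAt (fun s => u s i) (v i) t :=
    fun i => hasDerivAt_pi.mp (hu t) i
  -- product rule
  have key : HasDerivAt (fun s => u s ⬝ᵥ (P *ᵥ u s))
      (v ⬝ᵥ (P *ᵥ u t) + u t ⬝ᵥ (P *ᵥ v)) t := by
    have h1 : HasDerivAt (fun s => ∑ i, u s i * (P *ᵥ u s) i)
        (∑ i, (v i * (P *ᵥ u t) i + u t i * (P *ᵥ v) i)) t := by
      apply HasDerivAt.fun_sum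
      intro i _
      have hj : HasDerivAt (fun s => (P *ᵥ u s) i) ((P *ᵥ v) i) t := by
        simpa [mulVec, dotProduct] using
          HasDerivAt.fun_sum (fun j _ => ((hcoord j).const_mul (P i j)))
      exact (hcoord i).mul hj
    have : (∑ i, (v i * (P *ᵥ u t) i + u t i * (P *ᵥ v) i))
        = v ⬝ᵥ (P *ᵥ u t) + u t ⬝ᵥ (P *ᵥ v) := by
      simp [dotProduct, Finset.sum_add_distrib]
    rw [this] at h1
    exact h1
  -- symmetry trick
  have hsym : ∀ x y : Fin (n + 2) → ℝ, x ⬝ᵥ (P *ᵥ y) = y ⬝ᵥ (P *ᵥ x) := by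
    intro x y
    rw [dotProduct_mulVec, ← mulVec_transpose, hPt, dotProduct_comm]
  have hPv : P *ᵥ v = -a • (Q *ᵥ u t) + S := by
    have h1 : P * P⁻¹ = 1 := Matrix.mul_nonsing_inv P hdet
    have hPQ : P * (P⁻¹ * Q) = Q := by rw [← mul_assoc, h1, one_mul]
    rw [hvdef, mulVec_add, mulVec_smul, hD, mulVec_mulVec, hPQ, mulVec_mulVec, h1, one_mulVec]
  have hQsym : u t ⬝ᵥ (Qᵀ *ᵥ u t) = u t ⬝ᵥ (Q *ᵥ u t) := by
    rw [dotProduct_mulVec, ← mulVec_transpose, transpose_transpose, dotProduct_comm]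
  have hB : u t ⬝ᵥ (sbpB n *ᵥ u t) = u t (Fin.last (n + 1)) ^ 2 - u t 0 ^ 2 := by
    have h0 : (0 : Fin (n + 2)) ≠ Fin.last (n + 1) := by
      simp [Fin.ext_iff]
    simp only [sbpB, mulVec_diagonal, dotProduct]
    rw [Finset.sum_congr rfl (fun i _ => show
        u t i * ((if i = 0 then (-1:ℝ) else if i = Fin.last (n+1) then 1 else 0) * u t i)
        = (if i = 0 then -(u t 0 ^ 2) else 0) + (if i = Fin.last (n+1) then u t (Fin.last (n+1)) ^ 2 else 0) by
      split_ifs with h1 h2 <;> simp_all <;> ring)]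
    rw [Finset.sum_add_distrib]
    simp
    ring
  have hBQ : u t ⬝ᵥ (Q *ᵥ u t) + u t ⬝ᵥ (Q *ᵥ u t)
      = u t (Fin.last (n + 1)) ^ 2 - u t 0 ^ 2 := by
    rw [← hB, ← hQ, add_mulVec, dotProduct_add, hQsym]
  have hS : u t ⬝ᵥ S = -a * u t 0 ^ 2 := by
    simp [hSdef, dotProduct]
    ring
  have hval : v ⬝ᵥ (P *ᵥ u t) + u t ⬝ᵥ (P *ᵥ v)
      = -a * (u t (Fin.last (n + 1))) ^ 2 - a * (u t 0) ^ 2 := by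
    rw [hsym v (u t), hPv]
    simp only [dotProduct_add, dotProduct_smul, smul_eq_mul]
    have := hBQ
    rw [hS]
    nlinarith [hBQ]
  rw [hval] at key
  refine ⟨key, ?_⟩
  nlinarith [sq_nonneg (u t 0), sq_nonneg (u t (Fin.last (n + 1)))]
end

section
/- Suppose there exist points y_1 < ... < y_N in [a,b] with y_1 = a, y_N = b and positive weights w_1, ..., w_N such that Σ_{j=1}^N w_j (fg)'(y_j) = ∫_a^b (fg)'(x) dx = f(b)g(b) - f(a)g(a) for all f, g in a finite-dimensional subspace V ⊆ C¹([a,b]) whose evaluation map at (y_1,...,y_N) restricted to V is injective. Define P = diag(w_1,...,w_N) and let D ∈ ℝ^{N×N} satisfy D f(y) = f'(y) for all f ∈ V (evaluation vectors at the y_j). Then Q := P D satisfies f(y)ᵀ (Q + Qᵀ) g(y) = f(y)ᵀ B g(y) for all f, g ∈ V, where B = diag(-1,0,...,0,1). -/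
open Matrix

theorem stmt10 (n : ℕ) (a b : ℝ) (y : Fin (n + 2) → ℝ)
    (hy : StrictMono y) (hya : y 0 = a) (hyb : y (Fin.last (n + 1)) = b)
    (w : Fin (n + 2) → ℝ) (hw : ∀ j, 0 < w j)
    (V : Submodule ℝ (ℝ → ℝ)) (hC1 : ∀ f ∈ V, ContDiff ℝ 1 f)
    (hinj : ∀ f ∈ V, (∀ j, f (y j) = 0) → f = 0)
    (hquad : ∀ f ∈ V, ∀ g ∈ V,
      ∑ j, w j * deriv (fun x => f x * g x) (y j) = f b * g b - f a * g a)
    (D : Matrix (Fin (n + 2)) (Fin (n + 2)) ℝ)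
    (hD : ∀ f ∈ V, D *ᵥ (fun j => f (y j)) = fun j => deriv f (y j)) :
    ∀ f ∈ V, ∀ g ∈ V,
      (fun j => f (y j)) ⬝ᵥ
          (((Matrix.diagonal w * D) + (Matrix.diagonal w * D)ᵀ) *ᵥ fun j => g (y j)) =
        (fun j => f (y j)) ⬝ᵥ (sbpB n *ᵥ fun j => g (y j)) := by
  intro f hf g hg
  have hdf : Differentiable ℝ f := (hC1 f hf).differentiable one_ne_zero
  have hdg : Differentiable ℝ g := (hC1 g hg).differentiable one_ne_zero
  have hQg : ((Matrix.diagonal w * D) *ᵥ fun j => g (y j)) = fun j => w j * deriv g (y j) := by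
    rw [← Matrix.mulVec_mulVec, hD g hg]
    funext j
    simp [Matrix.mulVec_diagonal]
  have hQf : ((Matrix.diagonal w * D) *ᵥ fun j => f (y j)) = fun j => w j * deriv f (y j) := by
    rw [← Matrix.mulVec_mulVec, hD f hf]
    funext j
    simp [Matrix.mulVec_diagonal]
  have hlast : (0 : Fin (n + 2)) ≠ Fin.last (n + 1) := by
    simp [Fin.ext_iff]
  have key : ∑ j, w j * deriv (fun x => f x * g x) (y j) = f b * g b - f a * g a :=
    hquad f hf g hg
  have hderiv : ∀ j, deriv (fun x => f x * g x) (y j)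
      = deriv f (y j) * g (y j) + f (y j) * deriv g (y j) := fun j =>
    deriv_mul (hdf (y j)) (hdg (y j))
  -- LHS
  have hL : (fun j => f (y j)) ⬝ᵥ
      (((Matrix.diagonal w * D) + (Matrix.diagonal w * D)ᵀ) *ᵥ fun j => g (y j))
      = ∑ j, w j * deriv (fun x => f x * g x) (y j) := by
    have hT : (fun j => f (y j)) ⬝ᵥ ((Matrix.diagonal w * D)ᵀ *ᵥ fun j => g (y j))
        = (fun j => g (y j)) ⬝ᵥ fun j => w j * deriv f (y j) := by
      rw [Matrix.mulVec_transpose, dotProduct_comm, ← Matrix.dotProduct_mulVec, hQf]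
    rw [Matrix.add_mulVec, dotProduct_add, hQg, hT]
    simp only [dotProduct]
    rw [← Finset.sum_add_distrib]
    refine Finset.sum_congr rfl fun j _ => ?_
    rw [hderiv j]
    ring
  rw [hL, key]
  -- RHS
  have hR : (fun j => f (y j)) ⬝ᵥ (sbpB n *ᵥ fun j => g (y j))
      = f b * g b - f a * g a := by
    simp only [sbpB, dotProduct, Matrix.mulVec_diagonal]
    have : ∀ j : Fin (n + 2), f (y j) * ((if j = 0 then (-1 : ℝ) else if j = Fin.last (n + 1) then 1 else 0) * g (y j))
        = (if j = 0 then -(f (y j) * g (y j)) else 0)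
          + (if j = Fin.last (n + 1) then f (y j) * g (y j) else 0) := by
      intro j
      by_cases h0 : j = 0
      · subst h0; simp [hlast.symm ∘ Eq.symm, Ne.symm hlast]
      · by_cases hl : j = Fin.last (n + 1) <;> simp [h0, hl]
    rw [Finset.sum_congr rfl fun j _ => this j, Finset.sum_add_distrib]
    simp [hya, hyb]
    ring
  rw [hR]
end
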